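/- Let m, d be positive integers with d < m, let Ẋ : Ω → Matrix (Fin m) (Fin d) ℝ be ℋ-strongly measurable and of full column rank d μ-almost surely, and set Q := (ẊᵀẊ)⁻¹Ẋᵀ (so that Q·Ẋ = I_d almost surely). Let μvec : Ω → ℝ^d be integrable, let g : Ω → ℝ^m, let u̇ : Ω → ℝ^m be integrable with conditional expectation μ[u̇ | ℋ] = 0 almost everywhere (coordinatewise), and define ẏ := Ẋ ·ᵥ μvec + g + u̇. If every entry of Q ·ᵥ u̇ and of Q ·ᵥ g (hence of Q ·ᵥ ẏ) is integrable, then ∫ μvec dμ = ∫ (Q ·ᵥ ẏ − Q ·ᵥ g) dμ. (Identification of the average partial effect E(μ) in the correlated random coefficient panel model with time-varying endogeneity.) -/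

import Mathlib

open MeasureTheory Matrix Filter

lemma measurable_det' {n : ℕ} : Measurable fun A : Fin n → Fin n → ℝ => (Matrix.of A).det := by
  simp_rw [Matrix.det_apply']
  refine Finset.measurable_sum _ fun σ _ => Measurable.const_mul ?_ _
  exact Finset.measurable_prod _ fun i _ =>
    (measurable_pi_apply i).comp (measurable_pi_apply (σ i))

lemma measurable_adjugate_entry {n : ℕ} (i j : Fin n) :
    Measurable fun A : Fin n → Fin n → ℝ => (Matrix.of A).adjugate i j := by
  simp_rw [Matrix.adjugate_apply]
  have : ∀ A : Fin n → Fin n → ℝ,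
      ((Matrix.of A).updateRow j (Pi.single i 1)).det
      = (Matrix.of (fun k l => if k = j then Pi.single i (1:ℝ) l else A k l)).det := by
    intro A
    congr 1
    ext k l
    simp [Matrix.updateRow_apply]
  simp_rw [this]
  refine measurable_det'.comp ?_
  refine measurable_pi_lambda _ fun k => measurable_pi_lambda _ fun l => ?_
  by_cases h : k = j
  · simp [h]
  · simp only [h, if_false]
    exact (measurable_pi_apply l).comp (measurable_pi_apply k)

lemma measurable_inv_entry {n : ℕ} (i j : Fin n) :
    Measurable fun A : Fin n → Fin n → ℝ => (Matrix.of A)⁻¹ i j := by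
  simp_rw [Matrix.inv_def, Matrix.smul_apply, Ring.inverse_eq_inv', smul_eq_mul]
  exact measurable_det'.inv.mul (measurable_adjugate_entry i j)

lemma isUnit_det_of_rank_eq {d : ℕ} (B : Matrix (Fin d) (Fin d) ℝ) (h : B.rank = d) :
    IsUnit B.det := by
  rw [← Matrix.isUnit_iff_isUnit_det, ← Matrix.mulVec_surjective_iff_isUnit]
  have hr : LinearMap.range B.mulVecLin = ⊤ := by
    apply Submodule.eq_top_of_finrank_eq
    rw [← Matrix.rank, h]
    simp
  intro y
  obtain ⟨x, hx⟩ := (LinearMap.range_eq_top (f := B.mulVecLin)).mp hr y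
  exact ⟨x, by simpa [Matrix.mulVecLin_apply] using hx⟩

lemma measurable_Q_entry {m d : ℕ} (i : Fin d) (j : Fin m) :
    Measurable fun X : Fin m → Fin d → ℝ =>
      (((Matrix.of X)ᵀ * Matrix.of X)⁻¹ * (Matrix.of X)ᵀ) i j := by
  have hrw : ∀ X : Fin m → Fin d → ℝ,
      (((Matrix.of X)ᵀ * Matrix.of X)⁻¹ * (Matrix.of X)ᵀ) i j
      = ∑ k, (Matrix.of (fun a b => ∑ l, X l a * X l b))⁻¹ i k * X j k := by
    intro X
    have hXX : (Matrix.of X)ᵀ * Matrix.of X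
        = Matrix.of (fun a b => ∑ l, X l a * X l b) := by
      ext a b
      simp [Matrix.mul_apply]
    rw [hXX, Matrix.mul_apply]
    rfl
  simp_rw [hrw]
  refine Finset.measurable_sum _ fun k _ => Measurable.mul ?_ ?_
  · exact (measurable_inv_entry i k).comp
      (measurable_pi_lambda _ fun a => measurable_pi_lambda _ fun b =>
        Finset.measurable_sum _ fun l _ =>
          (by fun_prop))
  · exact (measurable_pi_apply k).comp (measurable_pi_apply j)

lemma integral_mul_condexp_zero {Ω : Type*} {mΩ : MeasurableSpace Ω} {μ : Measure Ω}
    [IsProbabilityMeasure μ] {ℋ : MeasurableSpace Ω} (hℋ : ℋ ≤ mΩ) {φ u : Ω → ℝ}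
    (hφ : StronglyMeasurable[ℋ] φ) (hφu : Integrable (fun ω => φ ω * u ω) μ)
    (hu : Integrable u μ) (hce : μ[u | ℋ] =ᵐ[μ] 0) :
    ∫ ω, φ ω * u ω ∂μ = 0 := by
  have h1 : μ[(φ * u) | ℋ] =ᵐ[μ] φ * μ[u | ℋ] :=
    condExp_mul_of_stronglyMeasurable_left hφ hφu hu
  have h2 : μ[(φ * u) | ℋ] =ᵐ[μ] (0 : Ω → ℝ) := by
    refine h1.trans ?_
    filter_upwards [hce] with ω hω
    simp only [Pi.mul_apply, Pi.zero_apply] at *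
    simp [hω]
  calc ∫ ω, φ ω * u ω ∂μ = ∫ ω, (μ[(φ * u) | ℋ]) ω ∂μ := (integral_condExp hℋ).symm
    _ = ∫ _, (0 : ℝ) ∂μ := integral_congr_ae h2
    _ = 0 := integral_zero _ _

lemma integrable_pi' {Ω : Type*} {mΩ : MeasurableSpace Ω} {μ : Measure Ω} {d : ℕ}
    {f : Ω → Fin d → ℝ} (h : ∀ i, Integrable (fun ω => f ω i) μ) : Integrable f μ := by
  have hm : AEStronglyMeasurable f μ := by
    rw [aestronglyMeasurable_iff_aemeasurable]
    have h' := fun i => (h i).aemeasurable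
    refine ⟨fun ω i => (h' i).mk _ ω, measurable_pi_lambda _ fun i => (h' i).measurable_mk, ?_⟩
    filter_upwards [ae_all_iff.mpr fun i => (h' i).ae_eq_mk] with ω hω
    funext i
    exact hω i
  refine Integrable.mono' (g := fun ω => ∑ i, |f ω i|)
    (integrable_finset_sum _ fun i _ => (h i).abs) hm ?_
  filter_upwards with ω
  refine (pi_norm_le_iff_of_nonneg (by positivity)).mpr fun i => ?_
  calc ‖f ω i‖ = |f ω i| := rfl
    _ ≤ ∑ j, |f ω j| := Finset.single_le_sum (f := fun j => |f ω j|) (fun j _ => abs_nonneg _) (Finset.mem_univ i)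

/-- Identification of the average partial effect `E(μ)` in the correlated random coefficient
panel model with time-varying endogeneity. -/
theorem average_partial_effect_identification
    {Ω : Type*} {mΩ : MeasurableSpace Ω} (μ : Measure Ω) [IsProbabilityMeasure μ]
    (ℋ : MeasurableSpace Ω) (hℋ : ℋ ≤ mΩ)
    (m d : ℕ) (hd : 0 < d) (hdm : d < m)
    (Xdot : Ω → Matrix (Fin m) (Fin d) ℝ)
    (hXmeas : ∀ i j, StronglyMeasurable[ℋ] fun ω => Xdot ω i j)
    (hXrank : ∀ᵐ ω ∂μ, (Xdot ω).rank = d)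
    (Q : Ω → Matrix (Fin d) (Fin m) ℝ)
    (hQ : ∀ ω, Q ω = ((Xdot ω)ᵀ * Xdot ω)⁻¹ * (Xdot ω)ᵀ)
    (μvec : Ω → Fin d → ℝ) (hμvec : Integrable μvec μ)
    (g : Ω → Fin m → ℝ)
    (udot : Ω → Fin m → ℝ) (hu_int : Integrable udot μ)
    (hu_ce : ∀ i, μ[(fun ω => udot ω i) | ℋ] =ᵐ[μ] 0)
    (ydot : Ω → Fin m → ℝ)
    (hy : ∀ ω, ydot ω = Xdot ω *ᵥ μvec ω + g ω + udot ω)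
    (hQu : ∀ i, Integrable (fun ω => (Q ω *ᵥ udot ω) i) μ)
    (hQg : ∀ i, Integrable (fun ω => (Q ω *ᵥ g ω) i) μ)
    (hQy : ∀ i, Integrable (fun ω => (Q ω *ᵥ ydot ω) i) μ) :
    ∫ ω, μvec ω ∂μ = ∫ ω, (Q ω *ᵥ ydot ω - Q ω *ᵥ g ω) ∂μ := by
  -- coordinate integrability of udot
  have hu_i : ∀ j, Integrable (fun ω => udot ω j) μ := by
    intro j
    refine Integrable.mono' hu_int.norm
      ((continuous_apply j).comp_aestronglyMeasurable hu_int.aestronglyMeasurable) ?_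
    filter_upwards with ω
    simpa using norm_le_pi_norm (udot ω) j
  -- measurability of Q entries with respect to ℋ
  have hXm : Measurable[ℋ] (fun ω => (fun i j => Xdot ω i j : Fin m → Fin d → ℝ)) := by
    refine measurable_pi_lambda _ fun a => measurable_pi_lambda _ fun b => ?_
    exact (hXmeas a b).measurable
  have hQm : ∀ i j, Measurable[ℋ] fun ω => Q ω i j := by
    intro i j
    have : (fun ω => Q ω i j)
        = (fun X : Fin m → Fin d → ℝ =>
            (((Matrix.of X)ᵀ * Matrix.of X)⁻¹ * (Matrix.of X)ᵀ) i j) ∘ Xdot := by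
      funext ω; rw [hQ ω]; rfl
    rw [this]
    exact (measurable_Q_entry i j).comp hXm
  have hQsm : ∀ i j, StronglyMeasurable[ℋ] fun ω => Q ω i j :=
    fun i j => (hQm i j).stronglyMeasurable
  -- zero integral of coordinates of Q *ᵥ udot
  have hQu0 : ∀ i, ∫ ω, (Q ω *ᵥ udot ω) i ∂μ = 0 := by
    intro i
    set s : ℕ → Set Ω := fun n => {ω | ∀ a b, |Q ω a b| ≤ n} with hs
    have hsmeas : ∀ n, MeasurableSet[ℋ] (s n) := by
      intro n
      have : s n = ⋂ a, ⋂ b, {ω | |Q ω a b| ≤ (n : ℝ)} := by ext ω; simp [hs]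
      rw [this]
      exact MeasurableSet.iInter fun a => MeasurableSet.iInter fun b =>
        measurableSet_le (hQm a b).abs measurable_const
    have hterm : ∀ n (j : Fin m),
        Integrable (fun ω => ((s n).indicator (fun ω => Q ω i j) ω) * udot ω j) μ := by
      intro n j
      refine Integrable.mono' ((hu_i j).norm.const_mul n)
        ((((hQsm i j).indicator (hsmeas n)).mono hℋ).aestronglyMeasurable.mul
          (hu_i j).aestronglyMeasurable) ?_
      filter_upwards with ω
      rw [Real.norm_eq_abs, abs_mul]
      by_cases h : ω ∈ s n
      · rw [Set.indicator_of_mem h]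
        exact mul_le_mul_of_nonneg_right (h i j) (abs_nonneg _)
      · simp [Set.indicator_of_notMem h]
        positivity
    have hzero : ∀ n, ∫ ω, (s n).indicator (fun ω => (Q ω *ᵥ udot ω) i) ω ∂μ = 0 := by
      intro n
      have heq : ∀ ω, (s n).indicator (fun ω => (Q ω *ᵥ udot ω) i) ω
          = ∑ j, ((s n).indicator (fun ω => Q ω i j) ω) * udot ω j := by
        intro ω
        by_cases h : ω ∈ s n
        · simp only [Set.indicator_of_mem h]
          simp [Matrix.mulVec, dotProduct]
        · simp [Set.indicator_of_notMem h]
      simp_rw [heq]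
      rw [integral_finset_sum _ fun j _ => hterm n j]
      refine Finset.sum_eq_zero fun j _ => ?_
      exact integral_mul_condexp_zero hℋ ((hQsm i j).indicator (hsmeas n))
        (hterm n j) (hu_i j) (hu_ce j)
    have hlim : Tendsto (fun n => ∫ ω, (s n).indicator (fun ω => (Q ω *ᵥ udot ω) i) ω ∂μ)
        atTop (nhds (∫ ω, (Q ω *ᵥ udot ω) i ∂μ)) := by
      refine tendsto_integral_of_dominated_convergence (fun ω => |(Q ω *ᵥ udot ω) i|)
        (fun n => (hQu i).aestronglyMeasurable.indicator (hℋ _ (hsmeas n)))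
        (hQu i).abs ?_ ?_
      · intro n
        filter_upwards with ω
        by_cases h : ω ∈ s n
        · simp [Set.indicator_of_mem h, Real.norm_eq_abs]
        · simp [Set.indicator_of_notMem h, abs_nonneg]
      · filter_upwards with ω
        have hev : ∀ᶠ n in atTop,
            (s n).indicator (fun ω => (Q ω *ᵥ udot ω) i) ω = (Q ω *ᵥ udot ω) i := by
          filter_upwards [eventually_ge_atTop ⌈∑ a, ∑ b, |Q ω a b|⌉₊] with n hn
          refine Set.indicator_of_mem ?_ _
          intro a b
          calc |Q ω a b| ≤ ∑ a', ∑ b', |Q ω a' b'| := by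
                refine le_trans (Finset.single_le_sum (f := fun b' => |Q ω a b'|)
                  (fun _ _ => abs_nonneg _) (Finset.mem_univ b)) ?_
                exact Finset.single_le_sum (f := fun a' => ∑ b', |Q ω a' b'|)
                  (fun _ _ => Finset.sum_nonneg fun _ _ => abs_nonneg _) (Finset.mem_univ a)
            _ ≤ (⌈∑ a', ∑ b', |Q ω a' b'|⌉₊ : ℝ) := Nat.le_ceil _
            _ ≤ (n : ℝ) := by exact_mod_cast hn
        refine Tendsto.congr' ?_ tendsto_const_nhds
        filter_upwards [hev] with n hn
        exact hn.symm
    have hzero' : Tendsto (fun n => ∫ ω, (s n).indicator (fun ω => (Q ω *ᵥ udot ω) i) ω ∂μ)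
        atTop (nhds 0) := by
      simp_rw [hzero]
      exact tendsto_const_nhds
    exact tendsto_nhds_unique hlim hzero'
  -- almost-everywhere identity
  have key : ∀ᵐ ω ∂μ, Q ω *ᵥ ydot ω - Q ω *ᵥ g ω = μvec ω + Q ω *ᵥ udot ω := by
    filter_upwards [hXrank] with ω hω
    have hdet : IsUnit ((Xdot ω)ᵀ * Xdot ω).det :=
      isUnit_det_of_rank_eq _ (by rw [Matrix.rank_transpose_mul_self, hω])
    have hQX : Q ω * Xdot ω = 1 := by
      rw [hQ ω, Matrix.mul_assoc]
      exact Matrix.nonsing_inv_mul _ hdet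
    rw [hy ω, Matrix.mulVec_add, Matrix.mulVec_add, Matrix.mulVec_mulVec, hQX,
      Matrix.one_mulVec]
    abel
  -- integrability
  have h2 : Integrable (fun ω => Q ω *ᵥ udot ω) μ := integrable_pi' fun i => hQu i
  have hQu_zero : (∫ ω, Q ω *ᵥ udot ω ∂μ) = 0 := by
    funext i
    have hc := @ContinuousLinearMap.integral_comp_comm Ω (Fin d → ℝ) ℝ mΩ μ ℝ _ _ _ _ _ _ _ _ _
      (ContinuousLinearMap.proj (R := ℝ) (φ := fun _ : Fin d => ℝ) i) _ h2
    simp only [ContinuousLinearMap.proj_apply] at hc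
    rw [Pi.zero_apply, ← hc, hQu0 i]
  rw [integral_congr_ae key, integral_add hμvec h2, hQu_zero, add_zero]
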